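/- arXiv:2308.06372 — 3 statements merged into one kernel-verified Lean document; each statement's English description precedes it below -/
import Mathlib

section
/- Let m ≥ 1, π a permutation of {1,…,m}, and α₁,…,α_m ∈ ℝ with a' = -(1/2)∑_{n=1}^m ln((1+e^{2α_n})/2), and f_r as above. Then for each fixed n ∈ {1,…,m}: ∑_{x ∈ {0,1}^m, x̃_{π(n)} = 1} e^{2 f_r(x)} = (e^{2α_n}/(1+e^{2α_n})) · 2^m. -/
theorem stmt_2 (m : ℕ) (hm : 1 ≤ m) (π : Equiv.Perm (Fin m))
    (α : Fin m → ℝ) (a' : ℝ)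
    (xt : (Fin m → ZMod 2) → Fin m → ZMod 2)
    (hxt : ∀ x n, xt x n =
      if h : (n : ℕ) + 1 < m then x (π n) + x (π ⟨(n : ℕ) + 1, h⟩) else x (π n))
    (fr : (Fin m → ZMod 2) → ℝ)
    (hfr : ∀ x, fr x = (∑ k : Fin m, α k * ((xt x k).val : ℝ)) + a')
    (ha' : a' = -(1/2) * ∑ n : Fin m, Real.log ((1 + Real.exp (2 * α n)) / 2))
    (n : Fin m) :
    ∑ x ∈ Finset.univ.filter (fun x : Fin m → ZMod 2 => xt x n = 1),
        Real.exp (2 * fr x)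
      = Real.exp (2 * α n) / (1 + Real.exp (2 * α n)) * 2 ^ m := by
  classical
  -- xt is injective, hence bijective
  have hinj : Function.Injective xt := by
    intro x x' h
    have key : ∀ d (k : Fin m), (k : ℕ) + d + 1 = m → x (π k) = x' (π k) := by
      intro d
      induction d with
      | zero =>
        intro k hk
        have h1 : ¬ ((k : ℕ) + 1 < m) := by omega
        have h2 := congrFun h k
        rwa [hxt, hxt, dif_neg h1, dif_neg h1] at h2
      | succ d ih =>
        intro k hk
        have h1 : (k : ℕ) + 1 < m := by omega
        have h2 : x (π ⟨(k : ℕ) + 1, h1⟩) = x' (π ⟨(k : ℕ) + 1, h1⟩) :=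
          ih ⟨(k : ℕ) + 1, h1⟩ (by simp; omega)
        have h3 := congrFun h k
        rw [hxt, hxt, dif_pos h1, dif_pos h1, h2] at h3
        exact add_right_cancel h3
    funext j
    have hk : ((π.symm j : ℕ)) + (m - 1 - (π.symm j : ℕ)) + 1 = m := by
      have := (π.symm j).isLt; omega
    have := key _ (π.symm j) hk
    simpa using this
  have hbij : Function.Bijective xt := Finite.injective_iff_bijective.mp hinj
  -- reindex the sum along xt
  have hre : ∑ x ∈ Finset.univ.filter (fun x : Fin m → ZMod 2 => xt x n = 1),
        Real.exp (2 * fr x)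
      = ∑ y ∈ Finset.univ.filter (fun y : Fin m → ZMod 2 => y n = 1),
          Real.exp (2 * ((∑ k : Fin m, α k * (((y k).val : ℝ))) + a')) := by
    refine Finset.sum_bijective xt hbij (fun x => by simp) (fun x _ => by rw [hfr])
  rw [hre]
  -- abbreviations
  set E : Fin m → ℝ := fun k => Real.exp (2 * α k) with hE
  have hEpos : ∀ k, 0 < 1 + E k := fun k => by positivity
  -- the factor function
  set h : Fin m → ZMod 2 → ℝ :=
    fun k v => (if k = n then ((v.val : ℝ)) else 1) * Real.exp (2 * α k * (v.val : ℝ)) with hh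
  have hzmod : ∀ v : ZMod 2, v = 0 ∨ v = 1 := by decide
  -- rewrite filtered sum as full sum with indicator
  have hstep : ∑ y ∈ Finset.univ.filter (fun y : Fin m → ZMod 2 => y n = 1),
        Real.exp (2 * ((∑ k : Fin m, α k * (((y k).val : ℝ))) + a'))
      = ∑ y : Fin m → ZMod 2, Real.exp (2 * a') * ∏ k : Fin m, h k (y k) := by
    rw [Finset.sum_filter]
    refine Finset.sum_congr rfl fun y _ => ?_
    have hprod : ∏ k : Fin m, h k (y k)
        = (((y n).val : ℝ)) * ∏ k : Fin m, Real.exp (2 * α k * ((y k).val : ℝ)) := by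
      rw [hh, Finset.prod_mul_distrib, Finset.prod_ite_eq' Finset.univ n
        (fun k => (((y k).val : ℝ)))]
      simp
    have hexp : Real.exp (2 * ((∑ k : Fin m, α k * (((y k).val : ℝ))) + a'))
        = Real.exp (2 * a') * ∏ k : Fin m, Real.exp (2 * α k * ((y k).val : ℝ)) := by
      rw [← Real.exp_sum, ← Real.exp_add]
      congr 1
      rw [mul_add, Finset.mul_sum]
      rw [add_comm]
      congr 1
      exact Finset.sum_congr rfl fun k _ => by ring
    have hv0 : ((0 : ZMod 2)).val = 0 := rfl
    have hv1 : ((1 : ZMod 2)).val = 1 := rfl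
    rcases hzmod (y n) with h0 | h1
    · rw [if_neg (by rw [h0]; decide), hprod, h0]
      simp only [hv0, Nat.cast_zero, zero_mul, mul_zero]
    · rw [if_pos h1, hprod, h1, hexp]
      simp only [hv1, Nat.cast_one, one_mul]
  rw [hstep, ← Finset.mul_sum, ← Fintype.prod_sum]
  -- compute each inner sum over ZMod 2
  have hsum2 : ∀ f : ZMod 2 → ℝ, ∑ v : ZMod 2, f v = f 0 + f 1 := by
    intro f
    rw [show (Finset.univ : Finset (ZMod 2)) = {0, 1} from by decide,
      Finset.sum_pair (by decide)]
  have hv0 : ((0 : ZMod 2)).val = 0 := rfl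
  have hv1 : ((1 : ZMod 2)).val = 1 := rfl
  have hfac : ∀ k : Fin m, ∑ v : ZMod 2, h k v = if k = n then E k else 1 + E k := by
    intro k
    rw [hsum2, hh]
    by_cases hkn : k = n
    · simp only [hkn, if_pos rfl, hv0, hv1, Nat.cast_zero, Nat.cast_one, zero_mul, mul_zero,
        mul_one, one_mul, Real.exp_zero, zero_add, if_true, hE]
    · simp only [if_neg hkn, hv0, hv1, Nat.cast_zero, Nat.cast_one, mul_zero, mul_one, one_mul,
        Real.exp_zero, if_true, zero_add, hE]
  simp_rw [hfac]
  rw [← Finset.mul_prod_erase Finset.univ _ (Finset.mem_univ n)]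
  simp only [if_pos rfl]
  have hEr : ∏ k ∈ Finset.univ.erase n, (if k = n then E k else 1 + E k)
      = ∏ k ∈ Finset.univ.erase n, (1 + E k) :=
    Finset.prod_congr rfl fun k hk => if_neg (Finset.ne_of_mem_erase hk)
  rw [hEr]
  -- compute exp (2 a')
  have hlog : ∀ k : Fin m, Real.exp (Real.log ((1 + E k) / 2)) = (1 + E k) / 2 :=
    fun k => Real.exp_log (by positivity)
  have ha2 : Real.exp (2 * a') = ∏ k : Fin m, (2 / (1 + E k)) := by
    rw [ha']
    have : 2 * (-(1/2) * ∑ k : Fin m, Real.log ((1 + Real.exp (2 * α k)) / 2))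
        = ∑ k : Fin m, -Real.log ((1 + E k) / 2) := by
      simp only [hE]
      rw [Finset.sum_neg_distrib]
      ring
    rw [this, Real.exp_sum]
    refine Finset.prod_congr rfl fun k _ => ?_
    rw [Real.exp_neg, hlog k, inv_div]
  rw [ha2]
  -- combine products
  have hErase : ∏ k ∈ Finset.univ.erase n, (1 + E k) ≠ 0 :=
    Finset.prod_ne_zero_iff.mpr fun k _ => (hEpos k).ne'
  have hprod2 : ∏ k : Fin m, (2 / (1 + E k))
      = 2 ^ m / ∏ k : Fin m, (1 + E k) := by
    rw [Finset.prod_div_distrib, Finset.prod_const]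
    simp
  have hsplit : ∏ k : Fin m, (1 + E k) = (1 + E n) * ∏ k ∈ Finset.univ.erase n, (1 + E k) :=
    (Finset.mul_prod_erase Finset.univ _ (Finset.mem_univ n)).symm
  rw [hprod2, hsplit]
  field_simp
  simp only [↓reduceIte, hE]
  exact mul_div_cancel_right₀ _ (by positivity)
end

section
/- With the same setup (f_r with normalization a' = -(1/2)∑ ln((1+e^{2α_n})/2)), for each n: ∑_{x : x̃_{π(n)}=1} e^{2f_r(x)} = e^{2α_n} · ∑_{x : x̃_{π(n)}=0} e^{2f_r(x)}, and ∑_{x : x̃_{π(n)}=0} e^{2f_r(x)} = 2^m/(1+e^{2α_n}). -/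
open Finset

lemma filter_eq_piFinset (m : ℕ) (n : Fin m) (c : ZMod 2) :
    Finset.univ.filter (fun y : Fin m → ZMod 2 => y n = c)
      = Fintype.piFinset (fun k => if k = n then {c} else Finset.univ) := by
  ext y
  simp only [mem_filter, mem_univ, true_and, Fintype.mem_piFinset]
  constructor
  · intro h k
    by_cases hk : k = n <;> simp [hk, h]
  · intro h
    have := h n
    simpa using this

lemma key (m : ℕ) (α : Fin m → ℝ) (n : Fin m) (c : ZMod 2) :
    ∑ y ∈ Finset.univ.filter (fun y : Fin m → ZMod 2 => y n = c),
        ∏ k, Real.exp (2 * α k * ((y k).val : ℝ))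
      = Real.exp (2 * α n * (c.val : ℝ)) *
        ∏ k ∈ Finset.univ.erase n, (1 + Real.exp (2 * α k)) := by
  rw [filter_eq_piFinset,
    ← Finset.prod_univ_sum (fun k => if k = n then ({c} : Finset (ZMod 2)) else univ)
      (fun i j => Real.exp (2 * α i * ((j.val : ℕ) : ℝ)))]
  rw [← Finset.mul_prod_erase (univ : Finset (Fin m)) _ (mem_univ n)]
  congr 1
  · simp
  · apply Finset.prod_congr rfl
    intro k hk
    have hk' : k ≠ n := (Finset.mem_erase.mp hk).1
    rw [if_neg hk']
    have : (univ : Finset (ZMod 2)) = {0, 1} := by decide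
    rw [this]
    rw [Finset.sum_insert (by decide), Finset.sum_singleton]
    rw [ZMod.val_zero, ZMod.val_one]
    norm_num [ZMod.val]

lemma T_bij (m : ℕ) (π : Equiv.Perm (Fin m)) :
    Function.Bijective (fun (x : Fin m → ZMod 2) (k : Fin m) =>
      if h : (k : ℕ) + 1 < m then x (π k) + x (π ⟨(k : ℕ) + 1, h⟩) else x (π k)) := by
  rw [Fintype.bijective_iff_surjective_and_card]
  refine ⟨?_, rfl⟩
  intro y
  refine ⟨fun i => ∑ j ∈ Finset.univ.filter (fun j => π.symm i ≤ j), y j, ?_⟩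
  funext k
  simp only [Equiv.symm_apply_apply]
  by_cases h : (k : ℕ) + 1 < m
  · rw [dif_pos h]
    have hfil : Finset.univ.filter (fun j => k ≤ j)
        = insert k (Finset.univ.filter (fun j : Fin m => (⟨(k:ℕ)+1, h⟩ : Fin m) ≤ j)) := by
      ext j
      simp only [mem_filter, mem_univ, true_and, mem_insert, Fin.le_def, Fin.ext_iff]
      omega
    have hnot : k ∉ Finset.univ.filter (fun j : Fin m => (⟨(k:ℕ)+1, h⟩ : Fin m) ≤ j) := by
      simp [Fin.le_def]
    rw [hfil, Finset.sum_insert hnot]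
    rw [add_assoc, CharTwo.add_self_eq_zero, add_zero]
  · rw [dif_neg h]
    have hfil : Finset.univ.filter (fun j => k ≤ j) = {k} := by
      ext j
      simp only [mem_filter, mem_univ, true_and, mem_singleton, Fin.le_def, Fin.ext_iff]
      have := j.isLt
      omega
    rw [hfil, Finset.sum_singleton]

theorem stmt_3 (m : ℕ) (hm : 1 ≤ m) (π : Equiv.Perm (Fin m))
    (α : Fin m → ℝ) (a' : ℝ)
    (xt : (Fin m → ZMod 2) → Fin m → ZMod 2)
    (hxt : ∀ x n, xt x n =
      if h : (n : ℕ) + 1 < m then x (π n) + x (π ⟨(n : ℕ) + 1, h⟩) else x (π n))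
    (fr : (Fin m → ZMod 2) → ℝ)
    (hfr : ∀ x, fr x = (∑ k : Fin m, α k * ((xt x k).val : ℝ)) + a')
    (ha' : a' = -(1/2) * ∑ n : Fin m, Real.log ((1 + Real.exp (2 * α n)) / 2))
    (n : Fin m) :
    (∑ x ∈ Finset.univ.filter (fun x : Fin m → ZMod 2 => xt x n = 1),
        Real.exp (2 * fr x)
      = Real.exp (2 * α n) *
        ∑ x ∈ Finset.univ.filter (fun x : Fin m → ZMod 2 => xt x n = 0),
          Real.exp (2 * fr x)) ∧
    (∑ x ∈ Finset.univ.filter (fun x : Fin m → ZMod 2 => xt x n = 0),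
        Real.exp (2 * fr x)
      = 2 ^ m / (1 + Real.exp (2 * α n))) := by
  have hpos : ∀ k : Fin m, (0:ℝ) < 1 + Real.exp (2 * α k) := fun k => by positivity
  set E := Real.exp (2 * a') with hEdef
  -- E = ∏ 2/(1+e^{2α k})
  have hE : E = ∏ k : Fin m, (2 / (1 + Real.exp (2 * α k))) := by
    rw [hEdef, ha']
    rw [show (2:ℝ) * (-(1/2) * ∑ k : Fin m, Real.log ((1 + Real.exp (2 * α k)) / 2))
        = ∑ k : Fin m, -Real.log ((1 + Real.exp (2 * α k)) / 2) by
      rw [Finset.sum_neg_distrib]; ring]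
    rw [Real.exp_sum]
    apply Finset.prod_congr rfl
    intro k _
    rw [Real.exp_neg, Real.exp_log (by positivity), inv_div]
  -- xt equals the canonical map
  have hxtfun : xt = fun (x : Fin m → ZMod 2) (k : Fin m) =>
      if h : (k : ℕ) + 1 < m then x (π k) + x (π ⟨(k : ℕ) + 1, h⟩) else x (π k) := by
    funext x k; exact hxt x k
  -- main computation for each c
  have hS : ∀ c : ZMod 2,
      ∑ x ∈ Finset.univ.filter (fun x : Fin m → ZMod 2 => xt x n = c),
          Real.exp (2 * fr x)
        = E * (Real.exp (2 * α n * (c.val : ℝ)) *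
            ∏ k ∈ Finset.univ.erase n, (1 + Real.exp (2 * α k))) := by
    intro c
    rw [Finset.sum_filter]
    have hstep : ∑ x : Fin m → ZMod 2, (if xt x n = c then Real.exp (2 * fr x) else 0)
        = ∑ y : Fin m → ZMod 2,
            (if y n = c then E * ∏ k, Real.exp (2 * α k * ((y k).val : ℝ)) else 0) := by
      apply Fintype.sum_bijective _ (T_bij m π)
      intro x
      have hxx : (fun (k : Fin m) =>
          if h : (k : ℕ) + 1 < m then x (π k) + x (π ⟨(k : ℕ) + 1, h⟩) else x (π k)) = xt x := by
        rw [hxtfun]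
      rw [hxx]
      congr 1
      rw [hfr, hEdef]
      rw [show (2:ℝ) * ((∑ k : Fin m, α k * ((xt x k).val : ℝ)) + a')
          = (∑ k : Fin m, 2 * α k * ((xt x k).val : ℝ)) + 2 * a' by
        rw [mul_add, Finset.mul_sum]
        congr 1
        exact Finset.sum_congr rfl (fun k _ => by ring)]
      rw [Real.exp_add, Real.exp_sum, mul_comm]
    rw [hstep, ← Finset.sum_filter, ← Finset.mul_sum, key m α n c]
  have hv1' : (1 : ZMod 2).val = 1 := rfl
  have hv0' : (0 : ZMod 2).val = 0 := rfl
  have hv1 : ((1 : ZMod 2).val : ℝ) = 1 := by rw [hv1']; norm_num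
  have hv0 : ((0 : ZMod 2).val : ℝ) = 0 := by rw [hv0']; norm_num
  have hP : (1 + Real.exp (2 * α n)) *
      ∏ k ∈ Finset.univ.erase n, (1 + Real.exp (2 * α k))
      = ∏ k : Fin m, (1 + Real.exp (2 * α k)) := by
    exact Finset.mul_prod_erase (Finset.univ : Finset (Fin m))
      (fun k => 1 + Real.exp (2 * α k)) (Finset.mem_univ n)
  constructor
  · rw [hS 1, hS 0, hv1, hv0]
    rw [mul_zero, Real.exp_zero, mul_one]
    ring
  · rw [hS 0, hv0, mul_zero, Real.exp_zero, one_mul]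
    rw [eq_div_iff (hpos n).ne']
    calc (E * ∏ k ∈ Finset.univ.erase n, (1 + Real.exp (2 * α k))) * (1 + Real.exp (2 * α n))
        = E * ((1 + Real.exp (2 * α n)) * ∏ k ∈ Finset.univ.erase n, (1 + Real.exp (2 * α k))) := by
          ring
      _ = E * ∏ k : Fin m, (1 + Real.exp (2 * α k)) := by rw [hP]
      _ = ∏ k : Fin m, ((2 / (1 + Real.exp (2 * α k))) * (1 + Real.exp (2 * α k))) := by
          rw [hE, Finset.prod_mul_distrib]
      _ = ∏ _k : Fin m, (2:ℝ) := Finset.prod_congr rfl (fun k _ => div_mul_cancel₀ (2:ℝ) (hpos k).ne')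
      _ = 2 ^ m := by simp
end

section
/- Let a, b be a complementary pair of complex sequences of length L with ‖a‖² = ‖b‖². Then the PMEPR of a satisfies sup_t |∑_{i} a_i e^{j2πit}|² / ‖a‖² ≤ 2, i.e., the PMEPR of a is at most 3 dB. -/
open Finset

private lemma reindex_lower (L : ℕ) (f : ℕ → ℕ → ℂ) :
    ∑ j ∈ range L, ∑ i ∈ range j, f i j
      = ∑ k ∈ Finset.Icc 1 (L - 1), ∑ i ∈ range (L - k), f i (i + k) := by
  rw [Finset.sum_sigma', Finset.sum_sigma']
  refine Finset.sum_nbij' (fun p => ⟨p.1 - p.2, p.2⟩) (fun p => ⟨p.2 + p.1, p.2⟩)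
    ?_ ?_ ?_ ?_ ?_ <;>
    simp only [Finset.mem_sigma, Finset.mem_range, Finset.mem_Icc, Sigma.forall,
      Sigma.mk.inj_iff, heq_eq_eq]
  · intro j i h; omega
  · intro k i h; omega
  · intro j i h; refine ⟨?_, ?_⟩ <;> first | trivial | omega
  · intro k i h; refine ⟨?_, ?_⟩ <;> first | trivial | omega
  · intro j i h
    congr 1
    omega

private lemma reindex_upper (L : ℕ) (f : ℕ → ℕ → ℂ) :
    ∑ j ∈ range L, ∑ i ∈ Finset.Ico (j + 1) L, f i j
      = ∑ k ∈ Finset.Icc 1 (L - 1), ∑ j ∈ range (L - k), f (j + k) j := by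
  rw [Finset.sum_sigma', Finset.sum_sigma']
  refine Finset.sum_nbij' (fun p => ⟨p.2 - p.1, p.1⟩) (fun p => ⟨p.2, p.2 + p.1⟩)
    ?_ ?_ ?_ ?_ ?_ <;>
    simp only [Finset.mem_sigma, Finset.mem_range, Finset.mem_Icc, Finset.mem_Ico,
      Sigma.forall, Sigma.mk.inj_iff, heq_eq_eq]
  · intro j i h; omega
  · intro k j h; omega
  · intro j i h; refine ⟨?_, ?_⟩ <;> first | trivial | omega
  · intro k j h; refine ⟨?_, ?_⟩ <;> first | trivial | omega
  · intro j i h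
    congr 1
    omega

private lemma split_square (L : ℕ) (f : ℕ → ℕ → ℂ) :
    ∑ j ∈ range L, ∑ i ∈ range L, f i j
      = (∑ i ∈ range L, f i i)
        + (∑ k ∈ Finset.Icc 1 (L - 1), ∑ j ∈ range (L - k), f (j + k) j)
        + (∑ k ∈ Finset.Icc 1 (L - 1), ∑ i ∈ range (L - k), f i (i + k)) := by
  have hsplit : ∀ j ∈ range L,
      ∑ i ∈ range L, f i j
        = (∑ i ∈ range j, f i j) + f j j + ∑ i ∈ Finset.Ico (j + 1) L, f i j := by
    intro j hj
    rw [Finset.mem_range] at hj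
    rw [Finset.range_eq_Ico, ← Finset.sum_Ico_consecutive _ (Nat.zero_le (j+1)) hj,
      Finset.sum_Ico_succ_top (Nat.zero_le j), ← Finset.range_eq_Ico]
  rw [Finset.sum_congr rfl hsplit, Finset.sum_add_distrib, Finset.sum_add_distrib,
    reindex_lower, reindex_upper]
  ring

theorem stmt_10 (L : ℕ) (hL : 1 ≤ L) (a b : ℕ → ℂ)
    (ρa ρb : ℕ → ℂ)
    (hρa : ∀ k, ρa k = ∑ i ∈ Finset.range (L - k), (starRingEnd ℂ) (a i) * a (i + k))
    (hρb : ∀ k, ρb k = ∑ i ∈ Finset.range (L - k), (starRingEnd ℂ) (b i) * b (i + k))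
    (hcomp : ∀ k, 1 ≤ k → k ≤ L - 1 → ρa k + ρb k = 0)
    (hnorm : (∑ i ∈ Finset.range L, ‖a i‖ ^ 2)
      = ∑ i ∈ Finset.range L, ‖b i‖ ^ 2) :
    ∀ t : ℝ,
      (‖∑ i ∈ Finset.range L,
          a i * Complex.exp (Complex.I * (2 * Real.pi * i * t))‖) ^ 2
        / (∑ i ∈ Finset.range L, ‖a i‖ ^ 2) ≤ 2 := by
  intro t
  set S : ℝ := ∑ i ∈ Finset.range L, ‖a i‖ ^ 2 with hS
  set z : ℂ := Complex.exp (Complex.I * (2 * Real.pi * t)) with hzdef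
  set w : ℂ := (starRingEnd ℂ) z with hwdef
  have hzw : z * w = 1 := by
    rw [hwdef, Complex.mul_conj, ← Complex.sq_norm, Complex.norm_exp]
    have : (Complex.I * (2 * Real.pi * t)).re = 0 := by simp
    rw [this]
    norm_num
  -- rewrite the exponentials as powers of z
  have hexp : ∀ c : ℕ → ℂ,
      (∑ i ∈ Finset.range L, c i * Complex.exp (Complex.I * (2 * Real.pi * i * t)))
        = ∑ i ∈ Finset.range L, c i * z ^ i := by
    intro c
    refine Finset.sum_congr rfl fun i _ => ?_
    congr 1
    rw [hzdef, ← Complex.exp_nat_mul]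
    congr 1
    push_cast
    ring
  set A : ℂ := ∑ i ∈ Finset.range L, a i * z ^ i with hA
  set B : ℂ := ∑ i ∈ Finset.range L, b i * z ^ i with hB
  -- T c = c-sum expansion
  have hT : ∀ c : ℕ → ℂ,
      (∑ i ∈ Finset.range L, c i * z ^ i)
          * (starRingEnd ℂ) (∑ i ∈ Finset.range L, c i * z ^ i)
        = (∑ i ∈ Finset.range L, (((‖c i‖ : ℝ) : ℂ)) ^ 2)
          + (∑ k ∈ Finset.Icc 1 (L - 1),
              (∑ i ∈ Finset.range (L - k), (starRingEnd ℂ) (c i) * c (i + k)) * z ^ k)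
          + (∑ k ∈ Finset.Icc 1 (L - 1),
              (starRingEnd ℂ)
                (∑ i ∈ Finset.range (L - k), (starRingEnd ℂ) (c i) * c (i + k)) * w ^ k) := by
    intro c
    have hconj : (starRingEnd ℂ) (∑ i ∈ Finset.range L, c i * z ^ i)
        = ∑ j ∈ Finset.range L, (starRingEnd ℂ) (c j) * w ^ j := by
      rw [map_sum]
      refine Finset.sum_congr rfl fun j _ => ?_
      rw [map_mul, map_pow]
    rw [hconj, Finset.sum_mul_sum]
    have : ∑ i ∈ Finset.range L, ∑ j ∈ Finset.range L,
        (c i * z ^ i) * ((starRingEnd ℂ) (c j) * w ^ j)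
        = ∑ j ∈ Finset.range L, ∑ i ∈ Finset.range L,
            (starRingEnd ℂ) (c j) * c i * z ^ i * w ^ j := by
      rw [Finset.sum_comm]
      exact Finset.sum_congr rfl fun j _ => Finset.sum_congr rfl fun i _ => by ring
    rw [this, split_square]
    congr 1
    · congr 1
      · refine Finset.sum_congr rfl fun i _ => ?_
        have : (starRingEnd ℂ) (c i) * c i * z ^ i * w ^ i
            = (starRingEnd ℂ) (c i) * c i * (z * w) ^ i := by ring
        rw [this, hzw, one_pow, mul_one, mul_comm, Complex.mul_conj]
        norm_cast
        rw [Complex.sq_norm]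
      · refine Finset.sum_congr rfl fun k _ => ?_
        rw [Finset.sum_mul]
        refine Finset.sum_congr rfl fun j _ => ?_
        have : (starRingEnd ℂ) (c j) * c (j + k) * z ^ (j + k) * w ^ j
            = (starRingEnd ℂ) (c j) * c (j + k) * z ^ k * (z * w) ^ j := by
          rw [pow_add, mul_pow]; ring
        rw [this, hzw, one_pow, mul_one]
    · refine Finset.sum_congr rfl fun k _ => ?_
      rw [map_sum, Finset.sum_mul]
      refine Finset.sum_congr rfl fun i _ => ?_
      rw [map_mul, Complex.conj_conj]
      have : (starRingEnd ℂ) (c (i + k)) * c i * z ^ i * w ^ (i + k)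
          = c i * (starRingEnd ℂ) (c (i + k)) * w ^ k * (z * w) ^ i := by
        rw [pow_add, mul_pow]; ring
      rw [this, hzw, one_pow, mul_one]
  -- Sum of the two expansions
  have hkey : A * (starRingEnd ℂ) A + B * (starRingEnd ℂ) B = ((2 * S : ℝ) : ℂ) := by
    rw [hT a, hT b]
    have hmid : (∑ k ∈ Finset.Icc 1 (L - 1),
          (∑ i ∈ Finset.range (L - k), (starRingEnd ℂ) (a i) * a (i + k)) * z ^ k)
        + (∑ k ∈ Finset.Icc 1 (L - 1),
          (∑ i ∈ Finset.range (L - k), (starRingEnd ℂ) (b i) * b (i + k)) * z ^ k) = 0 := by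
      rw [← Finset.sum_add_distrib]
      refine Finset.sum_eq_zero fun k hk => ?_
      rw [Finset.mem_Icc] at hk
      have h0 := hcomp k hk.1 hk.2
      rw [hρa, hρb] at h0
      rw [← add_mul, h0, zero_mul]
    have hmid' : (∑ k ∈ Finset.Icc 1 (L - 1),
          (starRingEnd ℂ)
            (∑ i ∈ Finset.range (L - k), (starRingEnd ℂ) (a i) * a (i + k)) * w ^ k)
        + (∑ k ∈ Finset.Icc 1 (L - 1),
          (starRingEnd ℂ)
            (∑ i ∈ Finset.range (L - k), (starRingEnd ℂ) (b i) * b (i + k)) * w ^ k) = 0 := by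
      rw [← Finset.sum_add_distrib]
      refine Finset.sum_eq_zero fun k hk => ?_
      rw [Finset.mem_Icc] at hk
      have h0 := hcomp k hk.1 hk.2
      rw [hρa, hρb] at h0
      rw [← add_mul, ← map_add, h0, map_zero, zero_mul]
    have hsum : (∑ i ∈ Finset.range L, (((‖a i‖ : ℝ) : ℂ)) ^ 2)
        + (∑ i ∈ Finset.range L, (((‖b i‖ : ℝ) : ℂ)) ^ 2) = ((2 * S : ℝ) : ℂ) := by
      have ha' : (∑ i ∈ Finset.range L, (((‖a i‖ : ℝ) : ℂ)) ^ 2) = ((S : ℝ) : ℂ) := by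
        rw [hS]; push_cast; rfl
      have hb' : (∑ i ∈ Finset.range L, (((‖b i‖ : ℝ) : ℂ)) ^ 2)
          = ((S : ℝ) : ℂ) := by
        rw [hnorm]; push_cast; rfl
      rw [ha', hb']
      push_cast
      ring
    linear_combination hsum + hmid + hmid'
  -- deduce the real inequality
  have hre : ‖A‖ ^ 2 + ‖B‖ ^ 2 = 2 * S := by
    have := congrArg Complex.re hkey
    rwa [Complex.add_re, Complex.mul_conj, Complex.mul_conj, Complex.ofReal_re,
      Complex.ofReal_re, Complex.ofReal_re, ← Complex.sq_norm,
      ← Complex.sq_norm] at this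
  have hle : ‖A‖ ^ 2 ≤ 2 * S := by
    nlinarith [sq_nonneg (‖B‖)]
  rw [hexp a, ← hA]
  rcases eq_or_lt_of_le (show (0:ℝ) ≤ S from Finset.sum_nonneg fun i _ => sq_nonneg _) with h0 | h0
  · rw [← h0, div_zero]; norm_num
  · rw [div_le_iff₀ h0]
    linarith
end
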